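/- If (x, p, α) is a d-dimensional lexicographic dividend equilibrium for the economy (u, ω) with simple prices satisfying both the weak cheapest bundle property and the aggregate cheapest bundle property, then there exist a price matrix q ∈ ℝ^{d×n} and a dividend matrix γ ∈ ℝ^{d×n} with γ ≥ 0 such that (x, q, γ) is a d-dimensional lexicographic dividend equilibrium for (u, ω) satisfying the strong cheapest bundle property; in particular LDE₋(u, ω) ⊆ LDE₊(u, ω). -/

import Mathlib

open Finset


section Farkas

variable {E : Type*} [NormedAddCommGroup E] [NormedSpace ℝ E] [FiniteDimensional ℝ E]
variable {ι : Type*} [Fintype ι]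

/-- Conic Carathéodory: any nonnegative combination can be rewritten with a
linearly independent support. -/
lemma conic_caratheodory (A : ι → E) :
    ∀ (N : ℕ) (μ : ι → ℝ), (univ.filter fun t => μ t ≠ 0).card ≤ N → (∀ t, 0 ≤ μ t) →
      ∃ ν : ι → ℝ, (∀ t, 0 ≤ ν t) ∧ ∑ t, ν t • A t = ∑ t, μ t • A t ∧
        LinearIndependent ℝ (fun t : {t // ν t ≠ 0} => A t) := by
  classical
  intro N
  induction N with
  | zero =>
      intro μ hcard _
      refine ⟨0, fun t => le_rfl, ?_, ?_⟩
      · have : ∀ t, μ t = 0 := by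
          intro t
          by_contra ht
          have ht' : t ∈ univ.filter fun t => μ t ≠ 0 := by simp [ht]
          have := card_pos.mpr ⟨t, ht'⟩
          omega
        simp [this]
      · have : IsEmpty {t // (0:ι → ℝ) t ≠ 0} := ⟨fun t => t.2 rfl⟩
        exact linearIndependent_empty_type
  | succ N ih =>
      intro μ hcard hμ
      by_cases hind : LinearIndependent ℝ (fun t : {t // μ t ≠ 0} => A t)
      · exact ⟨μ, hμ, rfl, hind⟩
      obtain ⟨g, hg0, t₀, hgt₀⟩ := Fintype.not_linearIndependent_iff.mp hind
      set g' : ι → ℝ := fun t => if h : μ t ≠ 0 then g ⟨t, h⟩ else 0 with hg'def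
      have hg'supp : ∀ t, μ t = 0 → g' t = 0 := by
        intro t ht; simp [hg'def, ht]
      have hg'sum : ∑ t, g' t • A t = 0 := by
        calc ∑ t, g' t • A t
            = ∑ t ∈ univ.filter (fun t => μ t ≠ 0), g' t • A t := by
              refine (Finset.sum_filter_of_ne ?_).symm
              intro t _ hne h
              exact hne (by simp [hg'supp t h])
          _ = ∑ i : {t // μ t ≠ 0}, g' ↑i • A ↑i := by
              rw [← Finset.sum_subtype_eq_sum_filter, Finset.subtype_univ]
          _ = ∑ i : {t // μ t ≠ 0}, g i • A ↑i := by
              refine Finset.sum_congr rfl ?_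
              rintro ⟨t, ht⟩ _
              simp [hg'def, ht]
          _ = 0 := hg0
      set g'' : ι → ℝ := if ∃ t, 0 < g' t then g' else -g' with hg''def
      have hg''supp : ∀ t, μ t = 0 → g'' t = 0 := by
        intro t ht
        by_cases h : ∃ t, 0 < g' t <;> simp [hg''def, h, hg'supp t ht]
      have hg''sum : ∑ t, g'' t • A t = 0 := by
        by_cases h : ∃ t, 0 < g' t
        · simpa [hg''def, h] using hg'sum
        · simp only [hg''def, if_neg h]
          simp only [Pi.neg_apply, neg_smul, Finset.sum_neg_distrib]
          rw [hg'sum, neg_zero]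
      have hg''pos : ∃ t, 0 < g'' t := by
        by_cases h : ∃ t, 0 < g' t
        · simpa [hg''def, h] using h
        · refine ⟨t₀, ?_⟩
          have h1 : g' ↑t₀ = g t₀ := by simp [hg'def, t₀.2]
          have h2 : g' ↑t₀ ≠ 0 := by rw [h1]; exact hgt₀
          have h3 : g' ↑t₀ ≤ 0 := by
            by_contra h4
            exact h ⟨↑t₀, lt_of_not_ge h4⟩
          simp only [hg''def, if_neg h, Pi.neg_apply]
          rcases lt_or_eq_of_le h3 with hlt | heq
          · linarith
          · exact absurd heq h2
      set s : Finset ι := univ.filter fun t => 0 < g'' t with hsdef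
      have hsne : s.Nonempty := by
        obtain ⟨t, ht⟩ := hg''pos
        exact ⟨t, by simp [hsdef, ht]⟩
      obtain ⟨tm, htm, htmmin⟩ := Finset.exists_min_image s (fun t => μ t / g'' t) hsne
      have htmpos : 0 < g'' tm := by simpa [hsdef] using htm
      set θ : ℝ := μ tm / g'' tm with hθdef
      have hθ0 : 0 ≤ θ := div_nonneg (hμ tm) htmpos.le
      set ν : ι → ℝ := fun t => μ t - θ * g'' t with hνdef
      have hν0 : ∀ t, 0 ≤ ν t := by
        intro t
        by_cases hgt : 0 < g'' t
        · have hts : t ∈ s := by simp [hsdef, hgt]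
          have := htmmin t hts
          have : θ * g'' t ≤ μ t := by
            rw [hθdef]
            calc (μ tm / g'' tm) * g'' t ≤ (μ t / g'' t) * g'' t := by
                  apply mul_le_mul_of_nonneg_right this hgt.le
              _ = μ t := div_mul_cancel₀ _ hgt.ne'
          simp [hνdef]; linarith
        · push_neg at hgt
          have : θ * g'' t ≤ 0 := mul_nonpos_of_nonneg_of_nonpos hθ0 hgt
          have := hμ t
          simp [hνdef]; linarith
      have hνsum : ∑ t, ν t • A t = ∑ t, μ t • A t := by
        simp only [hνdef, sub_smul, Finset.sum_sub_distrib, mul_smul]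
        rw [← Finset.smul_sum, hg''sum, smul_zero, sub_zero]
      have hνtm : ν tm = 0 := by
        simp only [hνdef, hθdef]
        rw [div_mul_cancel₀ _ htmpos.ne']
        ring
      have hμtm : μ tm ≠ 0 := by
        intro h
        have := hg''supp tm h
        rw [this] at htmpos
        exact lt_irrefl _ htmpos
      have hsub : (univ.filter fun t => ν t ≠ 0) ⊂ (univ.filter fun t => μ t ≠ 0) := by
        constructor
        · intro t ht
          simp only [mem_filter, mem_univ, true_and] at ht ⊢
          intro h
          exact ht (by simp [hνdef, h, hg''supp t h])
        · intro hsub'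
          have h1 : tm ∈ univ.filter fun t => μ t ≠ 0 := by simp [hμtm]
          have h2 := hsub' h1
          simp only [mem_filter, mem_univ, true_and] at h2
          exact h2 hνtm
      have hcard' : (univ.filter fun t => ν t ≠ 0).card ≤ N := by
        have := Finset.card_lt_card hsub
        omega
      obtain ⟨ν', h1, h2, h3⟩ := ih ν hcard' hν0
      exact ⟨ν', h1, h2.trans hνsum, h3⟩

end Farkas

section Farkas2

variable {E : Type*} [NormedAddCommGroup E] [NormedSpace ℝ E] [FiniteDimensional ℝ E]
variable {ι : Type*} [Fintype ι]

lemma isClosed_finite_cone (A : ι → E) :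
    IsClosed {z : E | ∃ μ : ι → ℝ, (∀ t, 0 ≤ μ t) ∧ z = ∑ t, μ t • A t} := by
  classical
  have key : {z : E | ∃ μ : ι → ℝ, (∀ t, 0 ≤ μ t) ∧ z = ∑ t, μ t • A t} =
      ⋃ s : {s : Finset ι // LinearIndependent ℝ (fun t : {t // t ∈ s} => A ↑t)},
        (fun μ : {t // t ∈ s.1} → ℝ => ∑ t, μ t • A ↑t) '' {μ | ∀ t, 0 ≤ μ t} := by
    ext z
    simp only [Set.mem_setOf_eq, Set.mem_iUnion, Set.mem_image]
    constructor
    · rintro ⟨μ, hμ, rfl⟩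
      obtain ⟨ν, hν0, hνsum, hνind⟩ :=
        conic_caratheodory A (univ.card) μ (card_le_card (subset_univ _)) hμ
      set s : Finset ι := univ.filter fun t => ν t ≠ 0 with hs
      have hmem : ∀ t : ι, t ∈ s ↔ ν t ≠ 0 := by intro t; simp [hs]
      have hind : LinearIndependent ℝ (fun t : {t // t ∈ s} => A ↑t) := by
        let e : {t // ν t ≠ 0} ≃ {t // t ∈ s} :=
          ⟨fun t => ⟨t.1, (hmem t.1).mpr t.2⟩, fun t => ⟨t.1, (hmem t.1).mp t.2⟩,
            fun t => rfl, fun t => rfl⟩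
        exact (linearIndependent_equiv' e (f := fun t : {t // t ∈ s} => A ↑t)
          (g := fun t : {t // ν t ≠ 0} => A ↑t) (funext fun t => rfl)).mp hνind
      refine ⟨⟨s, hind⟩, fun t => ν ↑t, fun t => hν0 ↑t, ?_⟩
      rw [← hνsum]
      calc ∑ t : {t // t ∈ s}, ν ↑t • A ↑t
          = ∑ t ∈ s, ν t • A t :=
            (Finset.sum_subtype (p := fun t => t ∈ s) s (fun _ => Iff.rfl) fun t => ν t • A t).symm
        _ = ∑ t, ν t • A t := by
            apply Finset.sum_subset (subset_univ _)
            intro t _ hts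
            have : ν t = 0 := by by_contra h; exact hts ((hmem t).mpr h)
            simp [this]
    · rintro ⟨s, μ, hμ, rfl⟩
      refine ⟨fun t => if h : t ∈ s.1 then μ ⟨t, h⟩ else 0, ?_, ?_⟩
      · intro t
        by_cases h : t ∈ s.1 <;> simp [h, hμ ⟨t, _⟩]
      · symm
        calc ∑ t : ι, (if h : t ∈ s.1 then μ ⟨t, h⟩ else 0) • A t
            = ∑ t ∈ s.1, (if h : t ∈ s.1 then μ ⟨t, h⟩ else 0) • A t :=
              (Finset.sum_subset (subset_univ _) (by intro t _ ht; simp [ht])).symm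
          _ = ∑ t : {t // t ∈ s.1}, (if h : ↑t ∈ s.1 then μ ⟨↑t, h⟩ else 0) • A ↑t :=
              Finset.sum_subtype (p := fun t => t ∈ s.1) s.1 (fun _ => Iff.rfl) _
          _ = ∑ t : {t // t ∈ s.1}, μ t • A ↑t := by
              apply Finset.sum_congr rfl
              rintro ⟨t, ht⟩ _
              simp [ht]
  rw [key]
  apply isClosed_iUnion_of_finite
  rintro ⟨s, hs⟩
  let L : ({t // t ∈ s} → ℝ) →ₗ[ℝ] E :=
    { toFun := fun μ => ∑ t, μ t • A ↑t
      map_add' := by intro a b; simp [add_smul, Finset.sum_add_distrib]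
      map_smul' := by intro c a; simp [mul_smul, Finset.smul_sum] }
  have hker : LinearMap.ker L = ⊥ := by
    rw [LinearMap.ker_eq_bot']
    intro m hm
    funext t
    exact Fintype.linearIndependent_iff.mp hs m hm t
  have hemb := LinearMap.isClosedEmbedding_of_injective hker
  have horth : IsClosed {μ : {t // t ∈ s} → ℝ | ∀ t, 0 ≤ μ t} := by
    have : {μ : {t // t ∈ s} → ℝ | ∀ t, 0 ≤ μ t} = ⋂ t, {μ | 0 ≤ μ t} := by
      ext μ; simp
    rw [this]
    exact isClosed_iInter fun t => isClosed_le continuous_const (continuous_apply t)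
  exact hemb.isClosedMap _ horth

end Farkas2

section Farkas3

open scoped InnerProductSpace

variable {ι : Type*} [Fintype ι]

lemma farkas_inner {E : Type*} [NormedAddCommGroup E] [InnerProductSpace ℝ E]
    [FiniteDimensional ℝ E] (A : ι → E) (g : E)
    (h : ∀ v : E, (∀ t, ⟪A t, v⟫_ℝ ≤ 0) → ⟪g, v⟫_ℝ ≤ 0) :
    ∃ lam : ι → ℝ, (∀ t, 0 ≤ lam t) ∧ g = ∑ t, lam t • A t := by
  classical
  by_contra hcon
  push_neg at hcon
  set C : Set E := {z : E | ∃ μ : ι → ℝ, (∀ t, 0 ≤ μ t) ∧ z = ∑ t, μ t • A t} with hC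
  have hgC : g ∉ C := by
    rintro ⟨μ, hμ, rfl⟩
    exact (hcon μ hμ) rfl
  let K : ConvexCone ℝ E :=
    { carrier := C
      smul_mem' := by
        rintro c hc z ⟨μ, hμ, rfl⟩
        refine ⟨fun t => c * μ t, fun t => mul_nonneg hc.le (hμ t), ?_⟩
        rw [Finset.smul_sum]
        exact Finset.sum_congr rfl fun t _ => (mul_smul c (μ t) (A t)).symm ▸ rfl
      add_mem' := by
        rintro z ⟨μ, hμ, rfl⟩ z' ⟨μ', hμ', rfl⟩
        refine ⟨fun t => μ t + μ' t, fun t => add_nonneg (hμ t) (hμ' t), ?_⟩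
        rw [← Finset.sum_add_distrib]
        exact Finset.sum_congr rfl fun t _ => (add_smul (μ t) (μ' t) (A t)).symm }
  have hKne : (K : Set E).Nonempty := ⟨0, ⟨0, fun t => le_rfl, by simp⟩⟩
  have hKclosed : IsClosed (K : Set E) := isClosed_finite_cone A
  obtain ⟨y, hy1, hy2⟩ :=
    ProperCone.hyperplane_separation' (C := ⟨K.toPointedCone ⟨0, fun t => le_rfl, by simp⟩, hKclosed⟩)
      (x₀ := g) hgC
  have hAK : ∀ t, A t ∈ K := by
    intro t
    refine ⟨fun t' => if t' = t then 1 else 0, fun t' => by positivity, ?_⟩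
    simp only [ite_smul, one_smul, zero_smul]
    rw [Finset.sum_ite_eq' univ t A]
    simp
  have hv : ∀ t, ⟪A t, -y⟫_ℝ ≤ 0 := by
    intro t
    rw [inner_neg_right]
    simpa using hy1 _ (hAK t)
  have := h (-y) hv
  rw [inner_neg_right] at this
  have h0 : 0 ≤ ⟪g, y⟫_ℝ := by linarith
  rw [real_inner_comm] at h0
  linarith

lemma farkas_pi {V : Type*} [Fintype V] (A : ι → V → ℝ) (g : V → ℝ)
    (h : ∀ v : V → ℝ, (∀ t, ∑ z, A t z * v z ≤ 0) → ∑ z, g z * v z ≤ 0) :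
    ∃ lam : ι → ℝ, (∀ t, 0 ≤ lam t) ∧ ∀ z, g z = ∑ t, lam t * A t z := by
  classical
  let T : (V → ℝ) ≃ₗ[ℝ] EuclideanSpace ℝ V := (WithLp.linearEquiv 2 ℝ (V → ℝ)).symm
  have happ : ∀ (a : V → ℝ) (z : V), T a z = a z := fun a z => rfl
  have hinner : ∀ a b : V → ℝ, ⟪T a, T b⟫_ℝ = ∑ z, a z * b z := by
    intro a b
    rw [PiLp.inner_apply]
    exact Finset.sum_congr rfl fun z _ => by rw [happ, happ]; exact Real.inner_apply _ _
  have hhyp : ∀ v : EuclideanSpace ℝ V, (∀ t, ⟪T (A t), v⟫_ℝ ≤ 0) → ⟪T g, v⟫_ℝ ≤ 0 := by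
    intro v hv
    have hv' : ∀ t, ∑ z, A t z * (T.symm v) z ≤ 0 := by
      intro t
      have := hv t
      rwa [show v = T (T.symm v) by simp, hinner] at this
    have := h (T.symm v) hv'
    rwa [show v = T (T.symm v) by simp, hinner]
  obtain ⟨lam, hlam, heq⟩ := farkas_inner (fun t => T (A t)) (T g) hhyp
  refine ⟨lam, hlam, fun z => ?_⟩
  have key : T g z = T (fun z => ∑ t, lam t * A t z) z := by
    rw [heq]
    have h3 : ∀ t : ι, lam t • T (A t) = T (fun z => lam t * A t z) := fun t =>
      (map_smul T (lam t) (A t)).symm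
    have h2 : ∑ t, lam t • T (A t) = T (fun z => ∑ t, lam t * A t z) := by
      rw [Finset.sum_congr rfl fun t _ => h3 t, ← map_sum]
      exact congrArg T (funext fun z' => by simp)
    rw [h2]
  rwa [happ, happ] at key

end Farkas3

/-- Dot product of two vectors in `ℝⁿ`. -/
def dotp {n : ℕ} (a b : Fin n → ℝ) : ℝ := ∑ j, a j * b j

/-- Membership in `Δⁿ₋`: nonnegative with coordinate sum at most 1. -/
def InSimplexLe {n : ℕ} (y : Fin n → ℝ) : Prop := (∀ j, 0 ≤ y j) ∧ ∑ j, y j ≤ 1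

/-- The set `M` of allocations: nonnegative doubly stochastic matrices. -/
def IsAlloc {n : ℕ} (x : Fin n → Fin n → ℝ) : Prop :=
  (∀ i j, 0 ≤ x i j) ∧ (∀ i, ∑ j, x i j = 1) ∧ (∀ j, ∑ i, x i j = 1)

/-- `k_i` (0-based): the first currency in which agent `i` has positive income,
or the last currency `d - 1` if there is none. -/
noncomputable def kIdx {n : ℕ} (d : ℕ) (p α : ℕ → Fin n → ℝ)
    (ω : Fin n → Fin n → ℝ) (i : Fin n) : ℕ :=
  sInf ({k | k < d ∧ 0 < dotp (p k) (ω i) + α k i} ∪ {d - 1})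

/-- The budget set `C^α_i(p)`. -/
def BudgetSet {n : ℕ} (d : ℕ) (p α : ℕ → Fin n → ℝ)
    (ω : Fin n → Fin n → ℝ) (i : Fin n) : Set (Fin n → ℝ) :=
  {y | InSimplexLe y ∧
    ∀ k ≤ kIdx d p α ω i, dotp (p k) y ≤ dotp (p k) (ω i) + α k i}

/-- `(x, p, α)` is a `d`-dimensional lexicographic dividend equilibrium for `(u, ω)`.
Currencies are indexed 0-based by `k < d`. -/
def IsLDE {n : ℕ} (u ω : Fin n → Fin n → ℝ) (d : ℕ)
    (x : Fin n → Fin n → ℝ) (p α : ℕ → Fin n → ℝ) : Prop :=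
  IsAlloc x ∧
  (∀ k, k < d → ∀ i, 0 ≤ α k i) ∧
  (∀ (j : Fin n) (k : ℕ), k < d → p k j ≠ 0 → (∀ l < k, p l j = 0) → 0 < p k j) ∧
  (∀ (i : Fin n) (k : ℕ), k < d →
    α k i = max (dotp (p k) (fun j => x i j - ω i j)) 0) ∧
  (∀ (i : Fin n), ∀ y ∈ BudgetSet d p α ω i, dotp (u i) y ≤ dotp (u i) (x i))

/-- The strong cheapest bundle property. -/
def StrongCB {n : ℕ} (u : Fin n → Fin n → ℝ) (d : ℕ)
    (x : Fin n → Fin n → ℝ) (p : ℕ → Fin n → ℝ) : Prop :=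
  ¬ ∃ (i : Fin n) (y : Fin n → ℝ) (k : ℕ),
      InSimplexLe y ∧ dotp (u i) (x i) ≤ dotp (u i) y ∧ k < d ∧
      (∀ l < k, dotp (p l) y = dotp (p l) (x i)) ∧
      dotp (p k) y < dotp (p k) (x i)

/-- Simple prices: every column of `p` has at most one nonzero entry. -/
def SimplePrices {n : ℕ} (d : ℕ) (p : ℕ → Fin n → ℝ) : Prop :=
  ∀ (j : Fin n) (k l : ℕ), k < d → l < d → p k j ≠ 0 → p l j ≠ 0 → k = l

/-- The weak cheapest bundle property. -/
def WeakCB {n : ℕ} (u ω : Fin n → Fin n → ℝ) (d : ℕ)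
    (x : Fin n → Fin n → ℝ) (p α : ℕ → Fin n → ℝ) : Prop :=
  ¬ ∃ (i : Fin n) (y : Fin n → ℝ) (k : ℕ),
      InSimplexLe y ∧ dotp (u i) (x i) ≤ dotp (u i) y ∧ k ≤ kIdx d p α ω i ∧
      (∀ l < k, dotp (p l) y = dotp (p l) (x i)) ∧
      dotp (p k) y < dotp (p k) (x i)

/-- The aggregate cheapest bundle property. -/
def AggCB {n : ℕ} (u : Fin n → Fin n → ℝ) (d : ℕ)
    (x : Fin n → Fin n → ℝ) (p : ℕ → Fin n → ℝ) : Prop :=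
  ¬ ∃ (β : Fin n → ℝ) (y : Fin n → Fin n → ℝ) (k : ℕ),
      (∀ i, 0 ≤ β i) ∧ (∀ i, InSimplexLe (y i)) ∧ k < d ∧
      (∀ i, 0 < β i → dotp (u i) (x i) ≤ dotp (u i) (y i)) ∧
      (∀ l < k, dotp (p l) (fun j => ∑ i, β i * y i j)
        = dotp (p l) (fun j => ∑ i, β i * x i j)) ∧
      dotp (p k) (fun j => ∑ i, β i * y i j)
        < dotp (p k) (fun j => ∑ i, β i * x i j) ∧
      (∀ j : Fin n, (∃ l < k, 0 < p l j) →
        (∑ i, β i * y i j) ≤ ∑ i, β i * x i j)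

lemma dotp_nonneg {n : ℕ} {a b : Fin n → ℝ} (ha : ∀ j, 0 ≤ a j) (hb : ∀ j, 0 ≤ b j) :
    0 ≤ dotp a b :=
  Finset.sum_nonneg fun j _ => mul_nonneg (ha j) (hb j)

lemma dotp_add_left {n : ℕ} (a b c : Fin n → ℝ) :
    dotp (fun j => a j + b j) c = dotp a c + dotp b c := by
  simp [dotp, add_mul, Finset.sum_add_distrib]

lemma dotp_le_dotp_left {n : ℕ} {a b c : Fin n → ℝ} (h : ∀ j, a j ≤ b j) (hc : ∀ j, 0 ≤ c j) :
    dotp a c ≤ dotp b c :=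
  Finset.sum_le_sum fun j _ => mul_le_mul_of_nonneg_right (h j) (hc j)

lemma dotp_eq_zero_coord {n : ℕ} {a b : Fin n → ℝ} (ha : ∀ j, 0 ≤ a j) (hb : ∀ j, 0 ≤ b j)
    (h : dotp a b = 0) : ∀ j, a j * b j = 0 := by
  intro j
  have := (Finset.sum_eq_zero_iff_of_nonneg (fun j _ => mul_nonneg (ha j) (hb j))).mp h
  exact this j (mem_univ j)

/-- helper vector constructor on `Fin n ⊕ Fin n × Fin n`. -/
def mkVec {n : ℕ} (a : Fin n → ℝ) (b : Fin n → Fin n → ℝ) : (Fin n ⊕ Fin n × Fin n) → ℝ :=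
  Sum.elim a fun ij => b ij.1 ij.2

lemma mkVec_pair {n : ℕ} (a : Fin n → ℝ) (b : Fin n → Fin n → ℝ) (v : (Fin n ⊕ Fin n × Fin n) → ℝ) :
    ∑ z, mkVec a b z * v z
      = (∑ i, a i * v (Sum.inl i)) + ∑ i, ∑ j, b i j * v (Sum.inr (i, j)) := by
  rw [Fintype.sum_sum_type]
  congr 1
  rw [Fintype.sum_prod_type]
  rfl

-- indicator sum helpers
lemma sum_if_eq {n : ℕ} (i : Fin n) (f : Fin n → ℝ) :
    ∑ i', (if i' = i then f i' else 0) = f i := by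
  rw [Finset.sum_ite_eq' univ i f]; simp

lemma sum_if_eq_mul {n : ℕ} (i : Fin n) (c : ℝ) (f : Fin n → ℝ) :
    ∑ i', (if i' = i then c else 0) * f i' = c * f i := by
  have : ∀ i', (if i' = i then c else 0) * f i' = if i' = i then c * f i' else 0 := by
    intro i'; split <;> simp
  rw [Finset.sum_congr rfl fun i' _ => this i', sum_if_eq]

lemma dotp_sub_right {n : ℕ} (a b c : Fin n → ℝ) :
    dotp a (fun j => b j - c j) = dotp a b - dotp a c := by
  simp [dotp, mul_sub, Finset.sum_sub_distrib]

lemma dotp_smul_right {n : ℕ} (a : Fin n → ℝ) (c : ℝ) (b : Fin n → ℝ) :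
    dotp a (fun j => c * b j) = c * dotp a b := by
  simp [dotp, Finset.mul_sum]; apply Finset.sum_congr rfl; intros; ring

lemma dotp_sum_right {n : ℕ} (a : Fin n → ℝ) (m : Fin n → Fin n → ℝ) :
    dotp a (fun j => ∑ i, m i j) = ∑ i, dotp a (m i) := by
  simp [dotp, Finset.mul_sum]
  exact Finset.sum_comm

lemma exists_correction {n : ℕ} (u : Fin n → Fin n → ℝ) (d : ℕ)
    (x : Fin n → Fin n → ℝ) (p : ℕ → Fin n → ℝ)
    (hx0 : ∀ i j, 0 ≤ x i j) (hx1 : ∀ i, ∑ j, x i j = 1)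
    (hagg : AggCB u d x p)
    (hp0 : ∀ l, l < d → ∀ j, 0 ≤ p l j)
    (k : ℕ) (hk : k < d)
    (c : ℕ → Fin n → ℝ) (hc0 : ∀ l j, 0 ≤ c l j)
    (hcsupp : ∀ l j, c l j ≠ 0 → ∃ l' < l, 0 < p l' j) :
    ∃ ck : Fin n → ℝ, (∀ j, 0 ≤ ck j) ∧ (∀ j, ck j ≠ 0 → ∃ l < k, 0 < p l j) ∧
      (∀ i y, InSimplexLe y → dotp (u i) (x i) ≤ dotp (u i) y →
        (∀ l, l < k → dotp (fun j => p l j + c l j) y = dotp (fun j => p l j + c l j) (x i)) →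
        dotp (fun j => p k j + ck j) (x i) ≤ dotp (fun j => p k j + ck j) y) := by
  classical
  set q : ℕ → Fin n → ℝ := fun l j => p l j + c l j with hq
  set Low : Fin n → Prop := fun j => ∃ l < k, 0 < p l j with hLow
  set A : (Fin n ⊕ (Fin n × Fin n) ⊕ Fin n ⊕ Fin n ⊕ (Fin n × Fin k × Bool) ⊕ Fin n) →
      (Fin n ⊕ Fin n × Fin n) → ℝ :=
    Sum.elim (fun i => mkVec (fun i' => if i' = i then -1 else 0) (fun _ _ => 0))
      (Sum.elim (fun ij => mkVec (fun _ => 0)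
          (fun i' j' => if i' = ij.1 ∧ j' = ij.2 then -1 else 0))
        (Sum.elim (fun i => mkVec (fun i' => if i' = i then -1 else 0)
            (fun i' _ => if i' = i then 1 else 0))
          (Sum.elim (fun i => mkVec (fun i' => if i' = i then dotp (u i) (x i) else 0)
              (fun i' j => if i' = i then -(u i j) else 0))
            (Sum.elim (fun ilb => mkVec
                (fun i' => if i' = ilb.1 then
                  -((if ilb.2.2 then (1:ℝ) else -1) * dotp (q ilb.2.1) (x ilb.1)) else 0)
                (fun i' j => if i' = ilb.1 then
                  (if ilb.2.2 then (1:ℝ) else -1) * q ilb.2.1 j else 0))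
              (fun j => if Low j then mkVec (fun i => -(x i j))
                (fun _ j' => if j' = j then 1 else 0) else fun _ => 0))))) with hA
  set gv : (Fin n ⊕ Fin n × Fin n) → ℝ :=
    mkVec (fun i => dotp (p k) (x i)) (fun _ j => -(p k j)) with hgv
  -- pairing computations
  have pair1 : ∀ (i : Fin n) (v : (Fin n ⊕ Fin n × Fin n) → ℝ),
      ∑ z, A (Sum.inl i) z * v z = -(v (Sum.inl i)) := by
    intro i v
    simp only [hA, Sum.elim_inl, mkVec_pair]
    rw [sum_if_eq_mul i (-1) (fun i' => v (Sum.inl i'))]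
    simp
  have pair2 : ∀ (ij : Fin n × Fin n) (v : (Fin n ⊕ Fin n × Fin n) → ℝ),
      ∑ z, A (Sum.inr (Sum.inl ij)) z * v z = -(v (Sum.inr ij)) := by
    intro ij v
    simp only [hA, Sum.elim_inl, Sum.elim_inr, mkVec_pair]
    have h1 : ∀ i', (∑ j', (if i' = ij.1 ∧ j' = ij.2 then (-1:ℝ) else 0) * v (Sum.inr (i', j')))
        = if i' = ij.1 then -(v (Sum.inr (i', ij.2))) else 0 := by
      intro i'
      by_cases hi : i' = ij.1
      · simp only [hi, true_and]
        rw [show ∀ S : Finset (Fin n), ∑ j' ∈ S, (if j' = ij.2 then (-1:ℝ) else 0) * v (Sum.inr (ij.1, j'))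
            = ∑ j' ∈ S, (if j' = ij.2 then -(v (Sum.inr (ij.1, j'))) else 0) from
            fun S => Finset.sum_congr rfl fun j' _ => by split <;> simp]
        rw [Finset.sum_ite_eq' univ ij.2 (fun j' => -(v (Sum.inr (ij.1, j'))))]
        simp [hi]
      · simp [hi]
    rw [Finset.sum_congr rfl fun i' _ => h1 i']
    rw [sum_if_eq ij.1 (fun i' => -(v (Sum.inr (i', ij.2))))]
    simp
  have pair3 : ∀ (i : Fin n) (v : (Fin n ⊕ Fin n × Fin n) → ℝ),
      ∑ z, A (Sum.inr (Sum.inr (Sum.inl i))) z * v z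
        = (∑ j, v (Sum.inr (i, j))) - v (Sum.inl i) := by
    intro i v
    simp only [hA, Sum.elim_inl, Sum.elim_inr, mkVec_pair]
    rw [sum_if_eq_mul i (-1) (fun i' => v (Sum.inl i'))]
    have : ∀ i', (∑ j, (if i' = i then (1:ℝ) else 0) * v (Sum.inr (i', j)))
        = if i' = i then ∑ j, v (Sum.inr (i', j)) else 0 := by
      intro i'; split <;> simp
    rw [Finset.sum_congr rfl fun i' _ => this i']
    rw [sum_if_eq i (fun i' => ∑ j, v (Sum.inr (i', j)))]
    ring
  have pair4 : ∀ (i : Fin n) (v : (Fin n ⊕ Fin n × Fin n) → ℝ),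
      ∑ z, A (Sum.inr (Sum.inr (Sum.inr (Sum.inl i)))) z * v z
        = dotp (u i) (x i) * v (Sum.inl i) - ∑ j, u i j * v (Sum.inr (i, j)) := by
    intro i v
    simp only [hA, Sum.elim_inl, Sum.elim_inr, mkVec_pair]
    rw [sum_if_eq_mul i (dotp (u i) (x i)) (fun i' => v (Sum.inl i'))]
    have : ∀ i', (∑ j, (if i' = i then -(u i j) else 0) * v (Sum.inr (i', j)))
        = if i' = i then -(∑ j, u i j * v (Sum.inr (i', j))) else 0 := by
      intro i'; split <;> simp [Finset.sum_neg_distrib]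
    rw [Finset.sum_congr rfl fun i' _ => this i']
    rw [sum_if_eq i (fun i' => -(∑ j, u i j * v (Sum.inr (i', j))))]
    ring
  have pair5 : ∀ (ilb : Fin n × Fin k × Bool) (v : (Fin n ⊕ Fin n × Fin n) → ℝ),
      ∑ z, A (Sum.inr (Sum.inr (Sum.inr (Sum.inr (Sum.inl ilb))))) z * v z
        = (if ilb.2.2 then (1:ℝ) else -1) *
            ((∑ j, q ilb.2.1 j * v (Sum.inr (ilb.1, j)))
              - dotp (q ilb.2.1) (x ilb.1) * v (Sum.inl ilb.1)) := by
    intro ilb v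
    simp only [hA, Sum.elim_inl, Sum.elim_inr, mkVec_pair]
    rw [sum_if_eq_mul ilb.1 (-((if ilb.2.2 then (1:ℝ) else -1) * dotp (q ilb.2.1) (x ilb.1)))
      (fun i' => v (Sum.inl i'))]
    have : ∀ i', (∑ j, (if i' = ilb.1 then (if ilb.2.2 then (1:ℝ) else -1) * q ilb.2.1 j else 0)
          * v (Sum.inr (i', j)))
        = if i' = ilb.1 then
            (if ilb.2.2 then (1:ℝ) else -1) * ∑ j, q ilb.2.1 j * v (Sum.inr (i', j)) else 0 := by
      intro i'
      split
      · rw [Finset.mul_sum]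
        apply Finset.sum_congr rfl; intros; ring
      · simp
    rw [Finset.sum_congr rfl fun i' _ => this i']
    rw [sum_if_eq ilb.1
      (fun i' => (if ilb.2.2 then (1:ℝ) else -1) * ∑ j, q ilb.2.1 j * v (Sum.inr (i', j)))]
    ring
  have pair6 : ∀ (j : Fin n) (v : (Fin n ⊕ Fin n × Fin n) → ℝ),
      ∑ z, A (Sum.inr (Sum.inr (Sum.inr (Sum.inr (Sum.inr j))))) z * v z
        = if Low j then (∑ i, v (Sum.inr (i, j))) - ∑ i, x i j * v (Sum.inl i) else 0 := by
    intro j v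
    simp only [hA, Sum.elim_inl, Sum.elim_inr]
    split
    · rw [mkVec_pair]
      have h2 : ∀ i, (∑ j', (if j' = j then (1:ℝ) else 0) * v (Sum.inr (i, j')))
          = v (Sum.inr (i, j)) := by
        intro i
        rw [sum_if_eq_mul j 1 (fun j' => v (Sum.inr (i, j')))]
        simp
      rw [Finset.sum_congr rfl fun i _ => h2 i]
      have h3 : ∑ i, -(x i j) * v (Sum.inl i) = -(∑ i, x i j * v (Sum.inl i)) := by
        rw [← Finset.sum_neg_distrib]
        exact Finset.sum_congr rfl fun i _ => by ring
      rw [h3]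
      ring
    · simp
  have pairg : ∀ v : (Fin n ⊕ Fin n × Fin n) → ℝ,
      ∑ z, gv z * v z
        = (∑ i, dotp (p k) (x i) * v (Sum.inl i)) - ∑ i, ∑ j, p k j * v (Sum.inr (i, j)) := by
    intro v
    simp only [hgv, mkVec_pair]
    have h1 : ∀ i, (∑ j, (-(p k j)) * v (Sum.inr (i, j)))
        = -(∑ j, p k j * v (Sum.inr (i, j))) := by
      intro i
      rw [← Finset.sum_neg_distrib]
      exact Finset.sum_congr rfl fun j _ => by ring
    rw [Finset.sum_congr rfl fun i _ => h1 i]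
    rw [Finset.sum_neg_distrib]
    ring
  have hhyp : ∀ v : (Fin n ⊕ Fin n × Fin n) → ℝ,
      (∀ t, ∑ z, A t z * v z ≤ 0) → ∑ z, gv z * v z ≤ 0 := by
    intro v hv
    by_contra hpos
    push_neg at hpos
    have hβ0 : ∀ i, 0 ≤ v (Sum.inl i) := by
      intro i
      have := hv (Sum.inl i)
      rw [pair1 i v] at this
      linarith
    have hw0 : ∀ i j, 0 ≤ v (Sum.inr (i, j)) := by
      intro i j
      have := hv (Sum.inr (Sum.inl (i, j)))
      rw [pair2 (i, j) v] at this
      linarith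
    have hrow : ∀ i, ∑ j, v (Sum.inr (i, j)) ≤ v (Sum.inl i) := by
      intro i
      have := hv (Sum.inr (Sum.inr (Sum.inl i)))
      rw [pair3 i v] at this
      linarith
    have huty : ∀ i, dotp (u i) (x i) * v (Sum.inl i) ≤ ∑ j, u i j * v (Sum.inr (i, j)) := by
      intro i
      have := hv (Sum.inr (Sum.inr (Sum.inr (Sum.inl i))))
      rw [pair4 i v] at this
      linarith
    have hqeq : ∀ (i : Fin n) (l : Fin k),
        ∑ j, q l j * v (Sum.inr (i, j)) = dotp (q l) (x i) * v (Sum.inl i) := by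
      intro i l
      have h1 := hv (Sum.inr (Sum.inr (Sum.inr (Sum.inr (Sum.inl (i, l, true))))))
      have h2 := hv (Sum.inr (Sum.inr (Sum.inr (Sum.inr (Sum.inl (i, l, false))))))
      rw [pair5 (i, l, true) v] at h1
      rw [pair5 (i, l, false) v] at h2
      simp at h1 h2
      linarith
    have hgood : ∀ j, Low j → ∑ i, v (Sum.inr (i, j)) ≤ ∑ i, x i j * v (Sum.inl i) := by
      intro j hj
      have := hv (Sum.inr (Sum.inr (Sum.inr (Sum.inr (Sum.inr j)))))
      rw [pair6 j v, if_pos hj] at this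
      linarith
    set y' : Fin n → Fin n → ℝ := fun i =>
      if 0 < v (Sum.inl i) then fun j => (v (Sum.inl i))⁻¹ * v (Sum.inr (i, j)) else x i with hy'
    have hwzero : ∀ i, ¬(0 < v (Sum.inl i)) → ∀ j, v (Sum.inr (i, j)) = 0 := by
      intro i hi j
      have hβi : v (Sum.inl i) = 0 := le_antisymm (not_lt.mp hi) (hβ0 i)
      have hsum : ∑ j, v (Sum.inr (i, j)) ≤ 0 := by rw [← hβi]; exact hrow i
      have h0 : ∑ j, v (Sum.inr (i, j)) = 0 :=
        le_antisymm hsum (Finset.sum_nonneg fun j _ => hw0 i j)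
      have := (Finset.sum_eq_zero_iff_of_nonneg (fun j _ => hw0 i j)).mp h0
      exact this j (mem_univ j)
    have hby : ∀ i j, v (Sum.inl i) * y' i j = v (Sum.inr (i, j)) := by
      intro i j
      by_cases hi : 0 < v (Sum.inl i)
      · simp only [hy', if_pos hi]
        field_simp
      · simp only [hy', if_neg hi]
        rw [hwzero i hi j]
        have hβi : v (Sum.inl i) = 0 := le_antisymm (not_lt.mp hi) (hβ0 i)
        rw [hβi]; ring
    have hWX : ∀ j, (∑ i, v (Sum.inl i) * y' i j) = ∑ i, v (Sum.inr (i, j)) :=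
      fun j => Finset.sum_congr rfl fun i _ => hby i j
    have hXc : ∀ j, (∑ i, x i j * v (Sum.inl i)) = ∑ i, v (Sum.inl i) * x i j :=
      fun j => Finset.sum_congr rfl fun i _ => by ring
    have hdW : ∀ r : Fin n → ℝ, dotp r (fun j => ∑ i, v (Sum.inl i) * y' i j)
        = ∑ i, ∑ j, r j * v (Sum.inr (i, j)) := by
      intro r
      rw [dotp_sum_right]
      apply Finset.sum_congr rfl
      intro i _
      rw [dotp]
      apply Finset.sum_congr rfl
      intro j _
      rw [← hby i j]
    have hdX : ∀ r : Fin n → ℝ, dotp r (fun j => ∑ i, v (Sum.inl i) * x i j)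
        = ∑ i, dotp r (x i) * v (Sum.inl i) := by
      intro r
      rw [dotp_sum_right]
      apply Finset.sum_congr rfl
      intro i _
      rw [dotp_smul_right]; ring
    apply hagg
    refine ⟨fun i => v (Sum.inl i), y', k, hβ0, ?_, hk, ?_, ?_, ?_, ?_⟩
    · intro i
      by_cases hi : 0 < v (Sum.inl i)
      · constructor
        · intro j
          simp only [hy', if_pos hi]
          exact mul_nonneg (inv_nonneg.mpr (hβ0 i)) (hw0 i j)
        · simp only [hy', if_pos hi]
          rw [← Finset.mul_sum]
          calc (v (Sum.inl i))⁻¹ * ∑ j, v (Sum.inr (i, j))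
              ≤ (v (Sum.inl i))⁻¹ * v (Sum.inl i) :=
                mul_le_mul_of_nonneg_left (hrow i) (inv_nonneg.mpr (hβ0 i))
            _ = 1 := inv_mul_cancel₀ hi.ne'
      · simp only [hy', if_neg hi]
        exact ⟨fun j => hx0 i j, le_of_eq (hx1 i)⟩
    · intro i hi
      have h := huty i
      have h2 : ∑ j, u i j * v (Sum.inr (i, j)) = v (Sum.inl i) * dotp (u i) (y' i) := by
        rw [dotp, Finset.mul_sum]
        apply Finset.sum_congr rfl
        intro j _
        rw [← hby i j]; ring
      rw [h2] at h
      have h3 : v (Sum.inl i) * dotp (u i) (x i) ≤ v (Sum.inl i) * dotp (u i) (y' i) := by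
        linarith
      exact (mul_le_mul_iff_right₀ hi).mp h3
    · intro l hl
      have hqWX : dotp (q l) (fun j => ∑ i, v (Sum.inl i) * y' i j)
          = dotp (q l) (fun j => ∑ i, v (Sum.inl i) * x i j) := by
        rw [hdW (q l), hdX (q l)]
        exact Finset.sum_congr rfl fun i _ => hqeq i ⟨l, hl⟩
      have hWle : ∀ j, Low j →
          (∑ i, v (Sum.inl i) * y' i j) ≤ ∑ i, v (Sum.inl i) * x i j := by
        intro j hj
        rw [hWX j, ← hXc j]
        exact hgood j hj
      have hcle : dotp (c l) (fun j => (∑ i, v (Sum.inl i) * y' i j)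
          - ∑ i, v (Sum.inl i) * x i j) ≤ 0 := by
        apply Finset.sum_nonpos
        intro j _
        by_cases hc : c l j = 0
        · simp [hc]
        · obtain ⟨l', hl', hpl'⟩ := hcsupp l j hc
          have hjLow : Low j := ⟨l', lt_trans hl' hl, hpl'⟩
          have := hWle j hjLow
          have h4 : (∑ i, v (Sum.inl i) * y' i j) - (∑ i, v (Sum.inl i) * x i j) ≤ 0 := by
            linarith
          exact mul_nonpos_of_nonneg_of_nonpos (hc0 l j) h4
      have hple : dotp (p l) (fun j => (∑ i, v (Sum.inl i) * y' i j)
          - ∑ i, v (Sum.inl i) * x i j) ≤ 0 := by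
        apply Finset.sum_nonpos
        intro j _
        rcases lt_or_eq_of_le (hp0 l (lt_trans hl hk) j) with hp | hp
        · have hjLow : Low j := ⟨l, hl, hp⟩
          have := hWle j hjLow
          have h4 : (∑ i, v (Sum.inl i) * y' i j) - (∑ i, v (Sum.inl i) * x i j) ≤ 0 := by
            linarith
          exact mul_nonpos_of_nonneg_of_nonpos (le_of_lt hp) h4
        · rw [← hp]; simp
      have hqzero : dotp (q l) (fun j => (∑ i, v (Sum.inl i) * y' i j)
          - ∑ i, v (Sum.inl i) * x i j) = 0 := by
        rw [dotp_sub_right]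
        rw [hqWX]
        ring
      have hsplit : dotp (q l) (fun j => (∑ i, v (Sum.inl i) * y' i j)
          - ∑ i, v (Sum.inl i) * x i j)
          = dotp (p l) (fun j => (∑ i, v (Sum.inl i) * y' i j)
              - ∑ i, v (Sum.inl i) * x i j)
            + dotp (c l) (fun j => (∑ i, v (Sum.inl i) * y' i j)
              - ∑ i, v (Sum.inl i) * x i j) :=
        dotp_add_left (p l) (c l) _
      have hpzero : dotp (p l) (fun j => (∑ i, v (Sum.inl i) * y' i j)
          - ∑ i, v (Sum.inl i) * x i j) = 0 := by linarith
      rw [dotp_sub_right] at hpzero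
      linarith
    · rw [hdW (p k), hdX (p k)]
      have := pairg v
      linarith
    · intro j hj
      have hjLow : Low j := hj
      rw [hWX j, ← hXc j]
      exact hgood j hjLow
  obtain ⟨lam, hlam0, hlameq⟩ := farkas_pi A gv hhyp
  refine ⟨fun j => if Low j then
      lam (Sum.inr (Sum.inr (Sum.inr (Sum.inr (Sum.inr j))))) else 0, ?_, ?_, ?_⟩
  · intro j
    have : (0:ℝ) ≤ if Low j then
        lam (Sum.inr (Sum.inr (Sum.inr (Sum.inr (Sum.inr j))))) else 0 := by
      by_cases h : Low j
      · rw [if_pos h]; exact hlam0 _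
      · rw [if_neg h]
    exact this
  · intro j hj
    by_cases h : Low j
    · exact h
    · exfalso
      apply hj
      show (if Low j then
        lam (Sum.inr (Sum.inr (Sum.inr (Sum.inr (Sum.inr j))))) else (0:ℝ)) = 0
      exact if_neg h
  · intro i y hy huy hqy
    set ck : Fin n → ℝ := fun j => if Low j then
      lam (Sum.inr (Sum.inr (Sum.inr (Sum.inr (Sum.inr j))))) else 0 with hck
    set v0 : (Fin n ⊕ Fin n × Fin n) → ℝ :=
      Sum.elim (fun i' => if i' = i then 1 else 0)
        (fun ij => if ij.1 = i then y ij.2 else 0) with hv0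
    have hv0l : ∀ i', v0 (Sum.inl i') = if i' = i then 1 else 0 := fun i' => rfl
    have hv0r : ∀ i' j, v0 (Sum.inr (i', j)) = if i' = i then y j else 0 := fun i' j => rfl
    have hmaster : ∑ z, gv z * v0 z = ∑ t, lam t * (∑ z, A t z * v0 z) := by
      calc ∑ z, gv z * v0 z = ∑ z, (∑ t, lam t * A t z) * v0 z :=
            Finset.sum_congr rfl fun z _ => by rw [← hlameq z]
        _ = ∑ z, ∑ t, lam t * A t z * v0 z := by
            apply Finset.sum_congr rfl; intro z _; rw [Finset.sum_mul]
        _ = ∑ t, ∑ z, lam t * A t z * v0 z := Finset.sum_comm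
        _ = ∑ t, lam t * ∑ z, A t z * v0 z := by
            apply Finset.sum_congr rfl; intro t _
            rw [Finset.mul_sum]
            apply Finset.sum_congr rfl; intros; ring
    have hLHS : ∑ z, gv z * v0 z = dotp (p k) (x i) - dotp (p k) y := by
      rw [pairg v0]
      have h1 : ∑ i', dotp (p k) (x i') * v0 (Sum.inl i') = dotp (p k) (x i) := by
        have : ∀ i', dotp (p k) (x i') * v0 (Sum.inl i')
            = if i' = i then dotp (p k) (x i') else 0 := by
          intro i'; rw [hv0l]; split <;> simp
        rw [Finset.sum_congr rfl fun i' _ => this i', sum_if_eq i]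
      have h2 : ∑ i', ∑ j, p k j * v0 (Sum.inr (i', j)) = dotp (p k) y := by
        have : ∀ i', (∑ j, p k j * v0 (Sum.inr (i', j)))
            = if i' = i then dotp (p k) y else 0 := by
          intro i'
          by_cases hii : i' = i
          · simp only [hii, if_true]
            rw [dotp]
            apply Finset.sum_congr rfl
            intro j _
            rw [hv0r]; simp
          · simp only [hii, if_false]
            apply Finset.sum_eq_zero
            intro j _
            rw [hv0r]; simp [hii]
        rw [Finset.sum_congr rfl fun i' _ => this i', sum_if_eq i]
      rw [h1, h2]
    have hS1 : ∑ i', lam (Sum.inl i') * (∑ z, A (Sum.inl i') z * v0 z) ≤ 0 := by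
      apply Finset.sum_nonpos
      intro i' _
      rw [pair1 i' v0, hv0l]
      apply mul_nonpos_of_nonneg_of_nonpos (hlam0 _)
      split <;> simp
    have hS2 : ∑ ij : Fin n × Fin n,
        lam (Sum.inr (Sum.inl ij)) * (∑ z, A (Sum.inr (Sum.inl ij)) z * v0 z) ≤ 0 := by
      apply Finset.sum_nonpos
      intro ij _
      rw [pair2 ij v0]
      apply mul_nonpos_of_nonneg_of_nonpos (hlam0 _)
      have : v0 (Sum.inr ij) = if ij.1 = i then y ij.2 else 0 := rfl
      rw [this]
      split
      · simp [hy.1 ij.2]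
      · simp
    have hS3 : ∑ i', lam (Sum.inr (Sum.inr (Sum.inl i')))
        * (∑ z, A (Sum.inr (Sum.inr (Sum.inl i'))) z * v0 z) ≤ 0 := by
      apply Finset.sum_nonpos
      intro i' _
      rw [pair3 i' v0]
      apply mul_nonpos_of_nonneg_of_nonpos (hlam0 _)
      rw [hv0l]
      by_cases hii : i' = i
      · simp only [hii, if_true]
        have : ∑ j, v0 (Sum.inr (i, j)) = ∑ j, y j := by
          apply Finset.sum_congr rfl
          intro j _
          rw [hv0r]; simp
        rw [this]
        have := hy.2
        linarith
      · simp only [hii, if_false]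
        have : ∑ j, v0 (Sum.inr (i', j)) = 0 := by
          apply Finset.sum_eq_zero
          intro j _
          rw [hv0r]; simp [hii]
        rw [this]; simp
    have hS4 : ∑ i', lam (Sum.inr (Sum.inr (Sum.inr (Sum.inl i'))))
        * (∑ z, A (Sum.inr (Sum.inr (Sum.inr (Sum.inl i')))) z * v0 z) ≤ 0 := by
      apply Finset.sum_nonpos
      intro i' _
      rw [pair4 i' v0]
      apply mul_nonpos_of_nonneg_of_nonpos (hlam0 _)
      rw [hv0l]
      by_cases hii : i' = i
      · simp only [hii, if_true, mul_one]
        have : ∑ j, u i j * v0 (Sum.inr (i, j)) = dotp (u i) y := by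
          rw [dotp]
          apply Finset.sum_congr rfl
          intro j _
          rw [hv0r]; simp
        rw [this]
        linarith
      · simp only [hii, if_false, mul_zero]
        have : ∑ j, u i' j * v0 (Sum.inr (i', j)) = 0 := by
          apply Finset.sum_eq_zero
          intro j _
          rw [hv0r]; simp [hii]
        rw [this]; simp
    have hS5 : ∑ ilb : Fin n × Fin k × Bool,
        lam (Sum.inr (Sum.inr (Sum.inr (Sum.inr (Sum.inl ilb)))))
        * (∑ z, A (Sum.inr (Sum.inr (Sum.inr (Sum.inr (Sum.inl ilb))))) z * v0 z) = 0 := by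
      apply Finset.sum_eq_zero
      intro ilb _
      rw [pair5 ilb v0]
      have hqy' : dotp (q ilb.2.1) y = dotp (q ilb.2.1) (x i) := hqy ilb.2.1 ilb.2.1.2
      by_cases hii : ilb.1 = i
      · have h1 : ∑ j, q ilb.2.1 j * v0 (Sum.inr (ilb.1, j)) = dotp (q ilb.2.1) y := by
          rw [dotp]
          apply Finset.sum_congr rfl
          intro j _
          rw [hv0r]; simp [hii]
        rw [h1, hv0l, if_pos hii, hii, hqy']
        simp
      · have h1 : ∑ j, q ilb.2.1 j * v0 (Sum.inr (ilb.1, j)) = 0 := by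
          apply Finset.sum_eq_zero
          intro j _
          rw [hv0r]; simp [hii]
        rw [h1, hv0l, if_neg hii]
        simp
    have hS6 : ∑ j, lam (Sum.inr (Sum.inr (Sum.inr (Sum.inr (Sum.inr j)))))
        * (∑ z, A (Sum.inr (Sum.inr (Sum.inr (Sum.inr (Sum.inr j))))) z * v0 z)
        = dotp ck y - dotp ck (x i) := by
      have hterm : ∀ j, lam (Sum.inr (Sum.inr (Sum.inr (Sum.inr (Sum.inr j)))))
          * (∑ z, A (Sum.inr (Sum.inr (Sum.inr (Sum.inr (Sum.inr j))))) z * v0 z)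
          = ck j * (y j - x i j) := by
        intro j
        rw [pair6 j v0]
        by_cases hj : Low j
        · rw [if_pos hj]
          have h1 : ∑ i', v0 (Sum.inr (i', j)) = y j := by
            have : ∀ i', v0 (Sum.inr (i', j)) = if i' = i then y j else 0 := fun i' => rfl
            rw [Finset.sum_congr rfl fun i' _ => this i', sum_if_eq i]
          have h2 : ∑ i', x i' j * v0 (Sum.inl i') = x i j := by
            have : ∀ i', x i' j * v0 (Sum.inl i') = if i' = i then x i' j else 0 := by
              intro i'; rw [hv0l]; split <;> simp
            rw [Finset.sum_congr rfl fun i' _ => this i', sum_if_eq i]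
          rw [h1, h2, hck]
          simp [hj]
        · rw [if_neg hj, hck]
          simp [hj]
      rw [Finset.sum_congr rfl fun j _ => hterm j]
      have : ∀ j, ck j * (y j - x i j) = ck j * y j - ck j * x i j := fun j => by ring
      rw [Finset.sum_congr rfl fun j _ => this j, Finset.sum_sub_distrib]
      rfl
    have hfin : dotp (p k) (x i) - dotp (p k) y ≤ dotp ck y - dotp ck (x i) := by
      rw [← hLHS]
      rw [hmaster]
      rw [Fintype.sum_sum_type, Fintype.sum_sum_type, Fintype.sum_sum_type,
        Fintype.sum_sum_type, Fintype.sum_sum_type]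
      linarith
    have hgoal1 : dotp (fun j => p k j + ck j) (x i) = dotp (p k) (x i) + dotp ck (x i) :=
      dotp_add_left (p k) ck (x i)
    have hgoal2 : dotp (fun j => p k j + ck j) y = dotp (p k) y + dotp ck y :=
      dotp_add_left (p k) ck y
    rw [hck] at hgoal1 hgoal2
    rw [hgoal1, hgoal2]
    rw [hck] at hfin
    linarith

/-- an LDE with simple prices satisfying the weak and aggregate cheapest
bundle properties can be supported as an LDE satisfying the strong cheapest bundle
property; in particular `LDE₋(u, ω) ⊆ LDE₊(u, ω)`. -/
theorem lde_minus_subset_lde_plus {n : ℕ} (hn : 0 < n)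
    (u ω : Fin n → Fin n → ℝ)
    (hu : ∀ i j, 0 ≤ u i j) (hω0 : ∀ i j, 0 ≤ ω i j)
    (hω1 : ∀ j, ∑ i, ω i j = 1)
    (d : ℕ) (hd : 1 ≤ d) (x : Fin n → Fin n → ℝ) (p α : ℕ → Fin n → ℝ)
    (hLDE : IsLDE u ω d x p α) (hsimple : SimplePrices d p)
    (hweak : WeakCB u ω d x p α) (hagg : AggCB u d x p) :
    ∃ (q γ : ℕ → Fin n → ℝ),
      IsLDE u ω d x q γ ∧ StrongCB u d x q := by
  classical
  obtain ⟨⟨hx0, hx1, hxcol⟩, hα0, hppos, hαdef, hopt⟩ := hLDE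
  have hp0 : ∀ l, l < d → ∀ j, 0 ≤ p l j := by
    intro l hl j
    rcases eq_or_ne (p l j) 0 with h | h
    · rw [h]
    · refine le_of_lt (hppos j l hl h ?_)
      intro l' hl'
      by_contra h'
      have := hsimple j l l' hl (lt_trans hl' hl) h h'
      omega
  -- base cheapest-bundle property at level 0, from the weak property
  have hCB0 : ∀ i y, InSimplexLe y → dotp (u i) (x i) ≤ dotp (u i) y →
      dotp (p 0) (x i) ≤ dotp (p 0) y := by
    intro i y h1 h2
    by_contra h3
    push_neg at h3
    exact hweak ⟨i, y, 0, h1, h2, Nat.zero_le _,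
      fun l hl => absurd hl (Nat.not_lt_zero l), h3⟩
  -- build corrections by induction on levels
  have hbuild : ∀ m : ℕ, ∃ c : ℕ → Fin n → ℝ,
      (∀ l j, 0 ≤ c l j) ∧ (∀ l j, c l j ≠ 0 → ∃ l' < l, 0 < p l' j) ∧
      (∀ l, m ≤ l → ∀ j, c l j = 0) ∧
      (∀ l, l < m → l < d →
        ∀ i y, InSimplexLe y → dotp (u i) (x i) ≤ dotp (u i) y →
          (∀ l', l' < l → dotp (fun j => p l' j + c l' j) y
            = dotp (fun j => p l' j + c l' j) (x i)) →
          dotp (fun j => p l j + c l j) (x i) ≤ dotp (fun j => p l j + c l j) y) := by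
    intro m
    induction m with
    | zero =>
        exact ⟨fun _ _ => 0, fun _ _ => le_rfl, fun l j h => absurd rfl h,
          fun _ _ _ => rfl, fun l hl => absurd hl (Nat.not_lt_zero l)⟩
    | succ m ih =>
        obtain ⟨c, hc0, hcsupp, hczero, hCB⟩ := ih
        by_cases hmd : d ≤ m
        · refine ⟨c, hc0, hcsupp, fun l hl j => hczero l (by omega) j, ?_⟩
          intro l hl hld
          exact hCB l (by omega) hld
        push_neg at hmd
        by_cases hm0 : m = 0
        · subst hm0
          have hczero' : ∀ l j, c l j = 0 := fun l j => hczero l (Nat.zero_le l) j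
          refine ⟨c, hc0, hcsupp, fun l hl j => hczero l (by omega) j, ?_⟩
          intro l hl hld i y h1 h2 _
          have hl0 : l = 0 := by omega
          subst hl0
          have hq0 : (fun j => p 0 j + c 0 j) = p 0 := by
            funext j; rw [hczero' 0 j]; ring
          rw [hq0]
          exact hCB0 i y h1 h2
        · -- m ≥ 1 : construct the correction at level m
          obtain ⟨ck, hck0, hcksupp, hckCB⟩ :=
            exists_correction u d x p hx0 hx1 hagg hp0 m hmd c hc0 hcsupp
          set c' : ℕ → Fin n → ℝ := fun l => if l = m then ck else c l with hc'
          have hc'eq : ∀ l, l ≠ m → c' l = c l := by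
            intro l hl; rw [hc']; simp [hl]
          have hc'm : c' m = ck := by rw [hc']; simp
          have hfun : ∀ l, l < m → (fun j => p l j + c' l j) = (fun j => p l j + c l j) := by
            intro l hl
            funext j
            rw [hc'eq l (by omega)]
          refine ⟨c', ?_, ?_, ?_, ?_⟩
          · intro l j
            by_cases hl : l = m
            · rw [hl, hc'm]; exact hck0 j
            · rw [hc'eq l hl]; exact hc0 l j
          · intro l j h
            by_cases hl : l = m
            · rw [hl] at h ⊢
              rw [hc'm] at h
              exact hcksupp j h
            · rw [hc'eq l hl] at h
              exact hcsupp l j h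
          · intro l hl j
            rw [hc'eq l (by omega)]
            exact hczero l (by omega) j
          · intro l hl hld i y h1 h2 h3
            by_cases hlm : l = m
            · subst hlm
              have h3' : ∀ l', l' < l → dotp (fun j => p l' j + c l' j) y
                  = dotp (fun j => p l' j + c l' j) (x i) := by
                intro l' hl'
                rw [← hfun l' hl']
                exact h3 l' hl'
              have := hckCB i y h1 h2 h3'
              have hfunm : (fun j => p l j + c' l j) = (fun j => p l j + ck j) := by
                funext j; rw [hc'm]
              rw [hfunm]
              exact this
            · have hlm' : l < m := by omega
              have h3' : ∀ l', l' < l → dotp (fun j => p l' j + c l' j) y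
                  = dotp (fun j => p l' j + c l' j) (x i) := by
                intro l' hl'
                rw [← hfun l' (by omega)]
                exact h3 l' hl'
              have := hCB l hlm' hld i y h1 h2 h3'
              rw [hfun l hlm']
              exact this
  obtain ⟨c, hc0, hcsupp, hczero, hCB⟩ := hbuild d
  refine ⟨fun l j => p l j + c l j,
    fun l i => max (dotp (fun j => p l j + c l j) (fun j => x i j - ω i j)) 0, ?_, ?_⟩
  · -- IsLDE for the corrected prices
    refine ⟨⟨hx0, hx1, hxcol⟩, fun l hl i => le_max_right _ _, ?_, fun i l hl => rfl, ?_⟩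
    · -- first nonzero entry of each column is positive
      intro j l hl hne hprev
      have hpc : ∀ l', l' < l → p l' j = 0 ∧ c l' j = 0 := by
        intro l' hl'
        have h : p l' j + c l' j = 0 := hprev l' hl'
        have h1 := hp0 l' (lt_trans hl' hl) j
        have h2 := hc0 l' j
        constructor <;> linarith
      have hck : c l j = 0 := by
        by_contra h
        obtain ⟨l', hl', hp'⟩ := hcsupp l j h
        exact absurd (hpc l' hl').1 (ne_of_gt hp')
      have hpl : p l j ≠ 0 := by
        intro h
        apply hne
        show p l j + c l j = 0
        rw [h, hck]; ring
      have := hppos j l hl hpl (fun l' hl' => (hpc l' hl').1)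
      show 0 < p l j + c l j
      rw [hck]; linarith
    · -- optimality: the corrected budget set is included in the original one
      intro i y hy
      apply hopt i y
      set κ := kIdx d p α ω i with hκ
      have hκle : κ ≤ d - 1 := Nat.sInf_le (Set.mem_union_right _ rfl)
      have hκd : κ < d := by omega
      have hinc0 : ∀ l, l < κ → dotp (p l) (ω i) = 0 ∧ α l i = 0 := by
        intro l hl
        have hld : l < d := lt_trans hl hκd
        have hnot : l ∉ ({k | k < d ∧ 0 < dotp (p k) (ω i) + α k i} ∪ {d - 1} : Set ℕ) := by
          intro hmem
          have hinf : κ ≤ l := Nat.sInf_le hmem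
          omega
        have h1 : ¬ (l < d ∧ 0 < dotp (p l) (ω i) + α l i) := fun h => hnot (Or.inl h)
        have h2 : 0 ≤ dotp (p l) (ω i) := dotp_nonneg (hp0 l hld) (hω0 i)
        have h3 : 0 ≤ α l i := hα0 l hld i
        have h4 : dotp (p l) (ω i) + α l i ≤ 0 := by
          by_contra hc
          push_neg at hc
          exact h1 ⟨hld, hc⟩
        constructor <;> linarith
      have hxzero : ∀ l, l < κ → dotp (p l) (x i) = 0 := by
        intro l hl
        have hld : l < d := lt_trans hl hκd
        have hα := hαdef i l hld
        rw [(hinc0 l hl).2] at hα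
        have h5 : dotp (p l) (fun j => x i j - ω i j) ≤ 0 := by
          have h6 := le_max_left (dotp (p l) (fun j => x i j - ω i j)) (0:ℝ)
          rw [← hα] at h6
          exact h6
        rw [dotp_sub_right] at h5
        have h6 : 0 ≤ dotp (p l) (x i) := dotp_nonneg (hp0 l hld) (hx0 i)
        have h7 := (hinc0 l hl).1
        linarith
      have hvan : ∀ l, l < κ → ∀ j, 0 < p l j → ω i j = 0 ∧ x i j = 0 := by
        intro l hl j hpj
        have hld := lt_trans hl hκd
        constructor
        · have := dotp_eq_zero_coord (hp0 l hld) (hω0 i) (hinc0 l hl).1 j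
          rcases mul_eq_zero.mp this with h | h
          · exact absurd h (ne_of_gt hpj)
          · exact h
        · have := dotp_eq_zero_coord (hp0 l hld) (hx0 i) (hxzero l hl) j
          rcases mul_eq_zero.mp this with h | h
          · exact absurd h (ne_of_gt hpj)
          · exact h
      have hcvan : ∀ l, l ≤ κ → dotp (c l) (ω i) = 0 ∧ dotp (c l) (x i) = 0 := by
        intro l hl
        constructor
        · apply Finset.sum_eq_zero
          intro j _
          by_cases hc : c l j = 0
          · rw [hc]; ring
          · obtain ⟨l', hl', hp'⟩ := hcsupp l j hc
            rw [(hvan l' (lt_of_lt_of_le hl' hl) j hp').1]; ring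
        · apply Finset.sum_eq_zero
          intro j _
          by_cases hc : c l j = 0
          · rw [hc]; ring
          · obtain ⟨l', hl', hp'⟩ := hcsupp l j hc
            rw [(hvan l' (lt_of_lt_of_le hl' hl) j hp').2]; ring
      have hqω : ∀ l, l ≤ κ → dotp (fun j => p l j + c l j) (ω i) = dotp (p l) (ω i) := by
        intro l hl
        rw [dotp_add_left, (hcvan l hl).1, add_zero]
      have hqx : ∀ l, l ≤ κ → dotp (fun j => p l j + c l j) (x i) = dotp (p l) (x i) := by
        intro l hl
        rw [dotp_add_left, (hcvan l hl).2, add_zero]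
      have hγα : ∀ l, l ≤ κ →
          max (dotp (fun j => p l j + c l j) (fun j => x i j - ω i j)) 0 = α l i := by
        intro l hl
        have hld : l < d := lt_of_le_of_lt hl hκd
        rw [hαdef i l hld]
        congr 1
        rw [dotp_sub_right, dotp_sub_right, hqx l hl, hqω l hl]
      have hκq : kIdx d (fun l j => p l j + c l j)
          (fun l i => max (dotp (fun j => p l j + c l j) (fun j => x i j - ω i j)) 0)
          ω i = κ := by
        have hκmem : κ ∈ ({k | k < d ∧ 0 < dotp (p k) (ω i) + α k i} ∪ {d - 1} : Set ℕ) :=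
          Nat.sInf_mem ⟨d - 1, Set.mem_union_right _ rfl⟩
        apply le_antisymm
        · rcases hκmem with hmem | hmem
          · apply Nat.sInf_le
            left
            refine ⟨hmem.1, ?_⟩
            show 0 < dotp (fun j => p κ j + c κ j) (ω i)
              + max (dotp (fun j => p κ j + c κ j) (fun j => x i j - ω i j)) 0
            rw [hqω κ le_rfl, hγα κ le_rfl]
            exact hmem.2
          · have hmem' : κ = d - 1 := hmem
            rw [hmem']
            exact Nat.sInf_le (Set.mem_union_right _ rfl)
        · unfold kIdx
          refine le_csInf ⟨d - 1, Set.mem_union_right _ rfl⟩ ?_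
          rintro b (hb | hb)
          · by_contra hlt
            push_neg at hlt
            have h1 : 0 < dotp (fun j => p b j + c b j) (ω i)
                + max (dotp (fun j => p b j + c b j) (fun j => x i j - ω i j)) 0 := hb.2
            rw [hqω b (by omega), hγα b (by omega)] at h1
            have h2 := hinc0 b hlt
            rw [h2.1, h2.2] at h1
            simp at h1
          · have hb' : b = d - 1 := hb
            omega
      obtain ⟨hy1, hy2⟩ := hy
      refine ⟨hy1, ?_⟩
      intro k hk
      have hk' : k ≤ kIdx d (fun l j => p l j + c l j)
          (fun l i => max (dotp (fun j => p l j + c l j) (fun j => x i j - ω i j)) 0) ω i := by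
        rw [hκq]; exact hk
      have h7 := hy2 k hk'
      have h8 : dotp (p k) y ≤ dotp (fun j => p k j + c k j) y := by
        rw [dotp_add_left]
        have := dotp_nonneg (hc0 k) hy1.1
        linarith
      have h9 : dotp (fun j => p k j + c k j) y ≤ dotp (fun j => p k j + c k j) (ω i)
          + max (dotp (fun j => p k j + c k j) (fun j => x i j - ω i j)) 0 := h7
      rw [hqω k hk, hγα k hk] at h9
      linarith
  · -- StrongCB
    rintro ⟨i, y, k, h1, h2, hk, h3, h4⟩
    have := hCB k hk hk i y h1 h2 h3
    exact absurd h4 (not_lt.mpr this)
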